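/- Let 0 < w_1 ≤ ... ≤ w_k with at least two distinct values, c_i > 0, and define P(α) = k ln α − k ln(∑_{i=1}^k c_i w_i^α) + (α−1) ∑_{i=1}^k ln w_i for α > 0. Then P(α) → −∞ as α → 0⁺ and P(α) → −∞ as α → ∞. -/

import Mathlib

open Finset Real Filter
open scoped Topology

theorem stmt_4 (k : ℕ) (hk : 2 ≤ k) (w c : Fin k → ℝ)
    (hw : ∀ i, 0 < w i) (hwmono : Monotone w)
    (hne : w ⟨0, by omega⟩ < w ⟨k - 1, by omega⟩) (hc : ∀ i, 0 < c i) :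
    Tendsto
      (fun α : ℝ =>
        (k : ℝ) * Real.log α - (k : ℝ) * Real.log (∑ i, c i * w i ^ α)
          + (α - 1) * ∑ i, Real.log (w i))
      (nhdsWithin 0 (Set.Ioi 0)) atBot ∧
    Tendsto
      (fun α : ℝ =>
        (k : ℝ) * Real.log α - (k : ℝ) * Real.log (∑ i, c i * w i ^ α)
          + (α - 1) * ∑ i, Real.log (w i))
      atTop atBot := by
  have hk0 : (0:ℝ) < k := by positivity
  have hne' : Nonempty (Fin k) := ⟨⟨0, by omega⟩⟩
  set S : ℝ := ∑ i, Real.log (w i) with hS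
  have hApos : ∀ α : ℝ, 0 < ∑ i, c i * w i ^ α := by
    intro α
    apply Finset.sum_pos (fun i _ => mul_pos (hc i) (Real.rpow_pos_of_pos (hw i) α)) univ_nonempty
  constructor
  · -- α → 0⁺
    have h1 : Tendsto (fun α : ℝ => (k : ℝ) * Real.log α)
        (nhdsWithin 0 (Set.Ioi 0)) atBot := by
      exact (Real.tendsto_log_nhdsGT_zero).const_mul_atBot hk0
    have hA : Tendsto (fun α : ℝ => ∑ i, c i * w i ^ α) (nhdsWithin 0 (Set.Ioi 0))
        (𝓝 (∑ i, c i * w i ^ (0:ℝ))) := by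
      apply Tendsto.mono_left _ nhdsWithin_le_nhds
      exact tendsto_finset_sum _ fun i _ =>
        ((Real.continuousAt_const_rpow (hw i).ne').tendsto).const_mul _
    have h2 : Tendsto (fun α : ℝ =>
        -((k : ℝ) * Real.log (∑ i, c i * w i ^ α)) + (α - 1) * S)
        (nhdsWithin 0 (Set.Ioi 0))
        (𝓝 (-((k : ℝ) * Real.log (∑ i, c i * w i ^ (0:ℝ))) + ((0:ℝ) - 1) * S)) := by
      refine Tendsto.add ?_ ?_
      · exact (((hA.log (hApos 0).ne').const_mul _).neg)
      · exact Tendsto.mono_left (by exact (tendsto_id.sub_const 1).mul_const S)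
          nhdsWithin_le_nhds
    have := h1.atBot_add h2
    refine this.congr (fun α => by ring)
  · -- α → ∞
    set kk : Fin k := ⟨k - 1, by omega⟩
    set i0 : Fin k := ⟨0, by omega⟩
    have hlogle : ∀ i, Real.log (w i) ≤ Real.log (w kk) := by
      intro i
      exact Real.log_le_log (hw i) (hwmono (by
        simp only [Fin.le_def, kk, Fin.val_mk]; omega))
    have hSlt : S < k * Real.log (w kk) := by
      have : S < ∑ _i : Fin k, Real.log (w kk) := by
        apply Finset.sum_lt_sum (fun i _ => hlogle i)
        exact ⟨i0, Finset.mem_univ _, Real.log_lt_log (hw i0) hne⟩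
      simpa [Finset.sum_const, Finset.card_univ, mul_comm] using this
    set m : ℝ := S - k * Real.log (w kk) with hm
    have hmneg : m < 0 := by simp [hm]; linarith
    set C : ℝ := -S - k * Real.log (c kk) with hC
    -- pointwise bound
    have hbound : ∀ α : ℝ,
        (k : ℝ) * Real.log α - (k : ℝ) * Real.log (∑ i, c i * w i ^ α)
          + (α - 1) * S ≤ (k : ℝ) * Real.log α + m * α + C := by
      intro α
      have hkey : Real.log (c kk) + α * Real.log (w kk)
          ≤ Real.log (∑ i, c i * w i ^ α) := by
        have h1 : c kk * w kk ^ α ≤ ∑ i, c i * w i ^ α := by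
          apply Finset.single_le_sum (f := fun i => c i * w i ^ α)
            (fun i _ => le_of_lt (mul_pos (hc i) (Real.rpow_pos_of_pos (hw i) α)))
            (Finset.mem_univ kk)
        have h2 := Real.log_le_log (mul_pos (hc kk) (Real.rpow_pos_of_pos (hw kk) α)) h1
        rwa [Real.log_mul (hc kk).ne' (Real.rpow_pos_of_pos (hw kk) α).ne', Real.log_rpow (hw kk)] at h2
      simp only [hm, hC]
      nlinarith [hkey]
    -- the bounding function tends to atBot
    have hdiv : Tendsto (fun α : ℝ => Real.log α / α) atTop (𝓝 0) :=
      Real.isLittleO_log_id_atTop.tendsto_div_nhds_zero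
    have hinner : Tendsto (fun α : ℝ => (k : ℝ) * (Real.log α / α) + m) atTop
        (𝓝 ((k : ℝ) * 0 + m)) := (hdiv.const_mul _).add tendsto_const_nhds
    have hmul : Tendsto (fun α : ℝ => α * ((k : ℝ) * (Real.log α / α) + m))
        atTop atBot := by
      apply Tendsto.atTop_mul_neg (by simpa using hmneg) tendsto_id hinner
    have hmain : Tendsto (fun α : ℝ => (k : ℝ) * Real.log α + m * α) atTop atBot := by
      apply hmul.congr'
      filter_upwards [eventually_gt_atTop (0:ℝ)] with α hα
      field_simp
    have hB : Tendsto (fun α : ℝ => (k : ℝ) * Real.log α + m * α + C) atTop atBot :=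
      hmain.atBot_add tendsto_const_nhds
    exact tendsto_atBot_mono hbound hB
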